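/- If V : ℝ × ℝⁿ → ℝ is C¹ and solves the HJB equation -V_t(t,x) - H*(t, x, ∇ₓV(t,x)) = 0 with V(t_f, x) = F(x), where H*(t,x,λ) = min_u [L(t,x,u) + λᵀf(t,x,u)], then for any admissible control u(·) and corresponding trajectory x(·) with x(t₀) = x₀, the total cost satisfies F(x(t_f)) + ∫_{t₀}^{t_f} L(τ,x,u)dτ ≥ V(t₀, x₀). (Verification theorem: the HJB solution is a lower bound on achievable cost.) -/

import Mathlib

open Matrix intervalIntegral

/-- Verification theorem: if `V` is C¹ (with partial derivatives `Vt`, `Vx`) and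
solves the HJB equation `-V_t - H*(t,x,∇ₓV) = 0` with `V(t_f,·) = F`, where
`H*(t,x,λ) = min_{u∈U} [L(t,x,u) + λᵀf(t,x,u)]` is attained, then for any admissible
control `u(·)` with trajectory `x(·)`, `x(t₀) = x₀`, the total cost satisfies
`F(x(t_f)) + ∫_{t₀}^{t_f} L dτ ≥ V(t₀,x₀)`. -/
theorem stmt_8 {n m : ℕ} (t0 tf : ℝ) (ht : t0 ≤ tf)
    (U : Set (Fin m → ℝ))
    (L : ℝ → (Fin n → ℝ) → (Fin m → ℝ) → ℝ)
    (f : ℝ → (Fin n → ℝ) → (Fin m → ℝ) → (Fin n → ℝ))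
    (hL : Continuous fun p : ℝ × (Fin n → ℝ) × (Fin m → ℝ) => L p.1 p.2.1 p.2.2)
    (hf : Continuous fun p : ℝ × (Fin n → ℝ) × (Fin m → ℝ) => f p.1 p.2.1 p.2.2)
    (F : (Fin n → ℝ) → ℝ)
    (V : ℝ → (Fin n → ℝ) → ℝ)
    (Vt : ℝ → (Fin n → ℝ) → ℝ) (Vx : ℝ → (Fin n → ℝ) → (Fin n → ℝ))
    (hVt : Continuous fun p : ℝ × (Fin n → ℝ) => Vt p.1 p.2)
    (hVx : Continuous fun p : ℝ × (Fin n → ℝ) => Vx p.1 p.2)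
    (hchain : ∀ (y y' : ℝ → (Fin n → ℝ)) (t : ℝ), HasDerivAt y (y' t) t →
      HasDerivAt (fun s => V s (y s)) (Vt t (y t) + Vx t (y t) ⬝ᵥ y' t) t)
    (Hstar : ℝ → (Fin n → ℝ) → (Fin n → ℝ) → ℝ)
    (hHstar : ∀ t x lam, IsLeast ((fun u => L t x u + lam ⬝ᵥ f t x u) '' U)
      (Hstar t x lam))
    (hHJB : ∀ t ∈ Set.Icc t0 tf, ∀ x, -Vt t x - Hstar t x (Vx t x) = 0)
    (hterm : ∀ x, V tf x = F x)
    (u : ℝ → (Fin m → ℝ)) (hu : Continuous u) (huU : ∀ t, u t ∈ U)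
    (x : ℝ → (Fin n → ℝ)) (x0 : Fin n → ℝ) (hx0 : x t0 = x0)
    (hxdyn : ∀ t, HasDerivAt x (f t (x t) (u t)) t) :
    F (x tf) + (∫ τ in t0..tf, L τ (x τ) (u τ)) ≥ V t0 x0 := by
  have hxc : Continuous x := by
    have : Differentiable ℝ x := fun t => (hxdyn t).differentiableAt
    exact this.continuous
  -- derivative of V along the trajectory
  set g' : ℝ → ℝ := fun t => Vt t (x t) + Vx t (x t) ⬝ᵥ f t (x t) (u t) with hg'
  have hderiv : ∀ t, HasDerivAt (fun s => V s (x s)) (g' t) t := fun t =>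
    hchain x (fun s => f s (x s) (u s)) t (hxdyn t)
  have hg'c : Continuous g' := by
    have h1 : Continuous fun t => Vt t (x t) :=
      hVt.comp (continuous_id.prodMk hxc)
    have h2 : Continuous fun t => Vx t (x t) :=
      hVx.comp (continuous_id.prodMk hxc)
    have h3 : Continuous fun t => f t (x t) (u t) :=
      hf.comp (continuous_id.prodMk (hxc.prodMk hu))
    exact h1.add (h2.dotProduct h3)
  have hLc : Continuous fun t => L t (x t) (u t) :=
    hL.comp (continuous_id.prodMk (hxc.prodMk hu))
  have hftc : (∫ τ in t0..tf, g' τ) = V tf (x tf) - V t0 (x t0) :=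
    intervalIntegral.integral_eq_sub_of_hasDerivAt
      (fun t _ => hderiv t) (hg'c.intervalIntegrable t0 tf)
  have hmono : (∫ τ in t0..tf, (-(L τ (x τ) (u τ)))) ≤ ∫ τ in t0..tf, g' τ := by
    apply intervalIntegral.integral_mono_on ht
      (hLc.neg.intervalIntegrable t0 tf) (hg'c.intervalIntegrable t0 tf)
    intro t htmem
    have hle : Hstar t (x t) (Vx t (x t)) ≤
        L t (x t) (u t) + Vx t (x t) ⬝ᵥ f t (x t) (u t) :=
      (hHstar t (x t) (Vx t (x t))).2 ⟨u t, huU t, rfl⟩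
    have hV : -Vt t (x t) - Hstar t (x t) (Vx t (x t)) = 0 := hHJB t htmem (x t)
    simp only [hg', Pi.neg_apply]
    linarith
  have hneg : (∫ τ in t0..tf, (-(L τ (x τ) (u τ)))) = -∫ τ in t0..tf, L τ (x τ) (u τ) := by
    exact intervalIntegral.integral_neg
  rw [hneg] at hmono
  have : F (x tf) = V tf (x tf) := (hterm (x tf)).symm
  rw [ge_iff_le, this, ← hx0]
  linarith [hftc, hmono]
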